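/- Let ω₁ ∈ 𝒮(ℝ) be a Schwartz kernel with real Fourier transform ω̂₁ satisfying μ ω̂₁(ξ) < 1 for all ξ ∈ ℝ. Then for every tempered distribution I ∈ 𝒮'(ℝ) there is a unique b ∈ 𝒮'(ℝ) solving b = I + μ ω₁ ∗ b, and it is given by b = I + μ K ∗ I where K ∈ 𝒮(ℝ) has Fourier transform K̂(ξ) = ω̂₁(ξ)/(1 − μ ω̂₁(ξ)). -/

import Mathlib

open MeasureTheory FourierTransform SchwartzMap
open scoped SchwartzMap
noncomputable section

-- Schwartz maps have temperate growth
lemma SchwartzMap.hasTemperateGrowth' (f : 𝓢(ℝ, ℂ)) :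
    Function.HasTemperateGrowth (⇑f) := by
  refine ⟨f.smooth ⊤, fun n => ⟨0, SchwartzMap.seminorm ℝ 0 n f, fun x => ?_⟩⟩
  simpa using f.norm_iteratedFDeriv_le_seminorm ℝ n x

-- multiplication of Schwartz by Schwartz
def mulS (h f : 𝓢(ℝ, ℂ)) : 𝓢(ℝ, ℂ) :=
  SchwartzMap.bilinLeftCLM (ContinuousLinearMap.mul ℝ ℂ) h.hasTemperateGrowth' f

lemma mulS_apply (h f : 𝓢(ℝ, ℂ)) (x : ℝ) : mulS h f x = f x * h x := rfl

def negS (f : 𝓢(ℝ, ℂ)) : 𝓢(ℝ, ℂ) :=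
  SchwartzMap.compCLMOfContinuousLinearEquiv ℝ (ContinuousLinearEquiv.neg ℝ) f

lemma negS_apply (f : 𝓢(ℝ, ℂ)) (x : ℝ) : negS f x = f (-x) := rfl

/-- correlation operator on the Fourier side -/
def corr (g φ : 𝓢(ℝ, ℂ)) : 𝓢(ℝ, ℂ) :=
  (fourierTransformCLE ℝ 𝓢(ℝ, ℂ)).symm (mulS (negS (fourierTransformCLE ℝ 𝓢(ℝ, ℂ) g)) (fourierTransformCLE ℝ 𝓢(ℝ, ℂ) φ))

lemma fourier_corr (g φ : 𝓢(ℝ, ℂ)) (ξ : ℝ) :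
    (fourierTransformCLE ℝ 𝓢(ℝ, ℂ)) (corr g φ) ξ = 𝓕 (⇑φ) ξ * 𝓕 (⇑g) (-ξ) := by
  rw [corr, ContinuousLinearEquiv.apply_symm_apply]
  rfl

lemma corr_add (g : 𝓢(ℝ, ℂ)) (φ ψ : 𝓢(ℝ, ℂ)) : corr g (φ + ψ) = corr g φ + corr g ψ := by
  unfold corr mulS negS
  rw [map_add (fourierTransformCLE ℝ 𝓢(ℝ, ℂ)), map_add, map_add]

lemma corr_smul (g : 𝓢(ℝ, ℂ)) (c : ℝ) (φ : 𝓢(ℝ, ℂ)) : corr g (c • φ) = c • corr g φ := by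
  unfold corr mulS negS
  rw [_root_.map_smul (fourierTransformCLE ℝ 𝓢(ℝ, ℂ)), _root_.map_smul, _root_.map_smul]

open Complex Real in
lemma corr_apply (g φ : 𝓢(ℝ, ℂ)) (x : ℝ) :
    corr g φ x = ∫ y : ℝ, g y * φ (x + y) := by
  have hE : ∀ r : ℝ, ‖Complex.exp (↑(2 * π * r) * Complex.I)‖ = 1 := fun r =>
    Complex.norm_exp_ofReal_mul_I _
  -- the integrand on ℝ × ℝ
  set F : ℝ × ℝ → ℂ := fun p =>
    Complex.exp (↑(2 * π * (p.1 * (x + p.2))) * Complex.I) * 𝓕 (⇑φ) p.1 * g p.2 with hF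
  have hFcont : Continuous F := by
    apply Continuous.mul
    apply Continuous.mul
    · exact Complex.continuous_exp.comp ((Complex.continuous_ofReal.comp (by continuity)).mul
        continuous_const)
    · exact ((fourierTransformCLE ℝ 𝓢(ℝ, ℂ) φ).continuous).comp continuous_fst
    · exact g.continuous.comp continuous_snd
  have hFint : Integrable F (volume.prod volume) := by
    apply (((fourierTransformCLE ℝ 𝓢(ℝ, ℂ) φ).integrable (μ := volume)).norm.mul_prod
      g.integrable.norm).mono' hFcont.aestronglyMeasurable
    filter_upwards with p
    simp only [hF, norm_mul, hE, one_mul]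
    exact le_of_eq rfl
  have claimB : corr g φ x
      = ∫ ξ : ℝ, Complex.exp (↑(2 * π * (ξ * x)) * Complex.I) * (𝓕 (⇑φ) ξ * 𝓕 (⇑g) (-ξ)) := by
    have h1 : corr g φ x = 𝓕⁻ (fun ξ => 𝓕 (⇑φ) ξ * 𝓕 (⇑g) (-ξ)) x := by
      have : ⇑(mulS (negS (fourierTransformCLE ℝ 𝓢(ℝ, ℂ) g)) (fourierTransformCLE ℝ 𝓢(ℝ, ℂ) φ))
          = fun ξ => 𝓕 (⇑φ) ξ * 𝓕 (⇑g) (-ξ) := rfl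
      rw [corr]
      show (𝓕⁻ (mulS (negS (fourierTransformCLE ℝ 𝓢(ℝ, ℂ) g))
        (fourierTransformCLE ℝ 𝓢(ℝ, ℂ) φ)) : 𝓢(ℝ, ℂ)) x = _
      rw [SchwartzMap.fourierInv_coe, this]
    rw [h1, Real.fourierInv_eq']
    simp [RCLike.inner_apply, smul_eq_mul, mul_comm]
  have claimA : ∀ ξ : ℝ, (∫ y : ℝ, F (ξ, y))
      = Complex.exp (↑(2 * π * (ξ * x)) * Complex.I) * (𝓕 (⇑φ) ξ * 𝓕 (⇑g) (-ξ)) := by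
    intro ξ
    have h2 : 𝓕 (⇑g) (-ξ) = ∫ y : ℝ, Complex.exp (↑(2 * π * (y * ξ)) * Complex.I) * g y := by
      rw [Real.fourier_eq']
      simp [RCLike.inner_apply, smul_eq_mul]
      congr 1 with v; ring_nf
    rw [h2, mul_comm (𝓕 (⇑φ) ξ), ← MeasureTheory.integral_mul_const, ←
      MeasureTheory.integral_const_mul]
    congr 1 with y
    show Complex.exp (↑(2 * π * (ξ * (x + y))) * Complex.I) * 𝓕 (⇑φ) ξ * g y = _
    have hsplit : Complex.exp (↑(2 * π * (ξ * (x + y))) * Complex.I)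
        = Complex.exp (↑(2 * π * (ξ * x)) * Complex.I)
          * Complex.exp (↑(2 * π * (y * ξ)) * Complex.I) := by
      rw [← Complex.exp_add]; congr 1; push_cast; ring
    rw [hsplit]; ring
  have claimC : ∀ y : ℝ, (∫ ξ : ℝ, F (ξ, y)) = g y * φ (x + y) := by
    intro y
    have hinv : 𝓕⁻ (𝓕 (⇑φ)) = ⇑φ :=
      Continuous.fourierInv_fourier_eq φ.continuous φ.integrable
        ((fourierTransformCLE ℝ 𝓢(ℝ, ℂ) φ).integrable)
    have h3 : φ (x + y) = ∫ ξ : ℝ, Complex.exp (↑(2 * π * (ξ * (x + y))) * Complex.I)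
        * 𝓕 (⇑φ) ξ := by
      conv_lhs => rw [← hinv]
      rw [Real.fourierInv_eq']
      simp [RCLike.inner_apply, smul_eq_mul]
      congr 1 with v; ring_nf
    rw [h3, mul_comm (g y), ← MeasureTheory.integral_mul_const]
  calc corr g φ x = ∫ ξ : ℝ, ∫ y : ℝ, F (ξ, y) := by
        rw [claimB]; congr 1 with ξ; rw [claimA]
    _ = ∫ y : ℝ, ∫ ξ : ℝ, F (ξ, y) := by
        exact MeasureTheory.integral_integral_swap (f := fun ξ y => F (ξ, y)) hFint
    _ = ∫ y : ℝ, g y * φ (x + y) := by congr 1 with y; rw [claimC]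

abbrev STop : WithTop ℕ∞ := ((⊤ : ℕ∞) : WithTop ℕ∞)

lemma natle_STop (n : ℕ) : (n : WithTop ℕ∞) ≤ STop := by
  have : ((n : ℕ∞) : WithTop ℕ∞) ≤ STop := by
    exact_mod_cast (le_top : (n : ℕ∞) ≤ ⊤)
  simpa using this

lemma hasTemperateGrowth_of_bounded {f : ℝ → ℂ} (hf : ContDiff ℝ STop f)
    (h : ∀ n : ℕ, ∃ C : ℝ, ∀ x : ℝ, ‖iteratedFDeriv ℝ n f x‖ ≤ C) :
    Function.HasTemperateGrowth f := by
  refine ⟨hf, fun n => ?_⟩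
  obtain ⟨C, hC⟩ := h n
  exact ⟨0, C, fun x => by simpa using hC x⟩

open Real in
lemma hasTemperateGrowth_inv_one_sub (w : 𝓢(ℝ, ℂ)) (c : ℝ) (hc : 0 < c)
    (him : ∀ ξ : ℝ, (w ξ).im = 0) (hlow : ∀ ξ : ℝ, c ≤ 1 - (w ξ).re) :
    Function.HasTemperateGrowth (fun ξ : ℝ => ((1 : ℂ) - w ξ)⁻¹) := by
  classical
  set v : ℝ → ℝ := fun ξ => 1 - (w ξ).re with hv
  have hvval : ∀ ξ, ((1 : ℂ) - w ξ) = ((v ξ : ℝ) : ℂ) := by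
    intro ξ
    apply Complex.ext <;> simp [hv, him ξ]
  -- the smooth modification of `t⁻¹`
  set p : ℝ → ℝ := fun t => c / 2 + Real.smoothTransition ((2 * t - c) / c) * (t - c / 2)
    with hpdef
  have hp_ge : ∀ t, c / 2 ≤ p t := by
    intro t
    rcases le_or_gt t (c / 2) with h | h
    · have h0 : (2 * t - c) / c ≤ 0 := div_nonpos_of_nonpos_of_nonneg (by linarith) hc.le
      simp [hpdef, Real.smoothTransition.zero_of_nonpos h0]
    · have h1 : 0 ≤ Real.smoothTransition ((2 * t - c) / c) := Real.smoothTransition.nonneg _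
      have h2 := mul_nonneg h1 (by linarith : (0:ℝ) ≤ t - c / 2)
      simp only [hpdef]
      linarith
  have hp_pos : ∀ t, 0 < p t := fun t => lt_of_lt_of_le (by linarith) (hp_ge t)
  have hp_eq : ∀ t, c ≤ t → p t = t := by
    intro t ht
    have h1 : (1 : ℝ) ≤ (2 * t - c) / c := (le_div_iff₀ hc).2 (by linarith)
    simp only [hpdef, Real.smoothTransition.one_of_one_le h1, one_mul]
    ring
  have hp_smooth : ContDiff ℝ STop p := by
    have h1 : ContDiff ℝ STop fun t : ℝ => (2 * t - c) / c :=
      ((contDiff_const.mul contDiff_id).sub contDiff_const).div_const c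
    have h2 : ContDiff ℝ STop fun t : ℝ => Real.smoothTransition ((2 * t - c) / c) :=
      (Real.smoothTransition.contDiff (n := ⊤)).comp h1
    have h3 : ContDiff ℝ STop fun t : ℝ => t - c / 2 := by fun_prop
    exact contDiff_const.add (h2.mul h3)
  set gfun : ℝ → ℝ := fun t => (p t)⁻¹ with hgdef
  have hg_smooth : ContDiff ℝ STop gfun := hp_smooth.inv fun t => (hp_pos t).ne'
  have hv_smooth : ContDiff ℝ STop v := by
    have h1 : ContDiff ℝ STop fun ξ : ℝ => (w ξ).re :=
      (Complex.reCLM.contDiff (n := STop)).comp (w.smooth ⊤)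
    exact contDiff_const.sub h1
  -- the target equals ofRealCLM ∘ gfun ∘ v
  have hkey : (fun ξ : ℝ => ((1 : ℂ) - w ξ)⁻¹)
      = Complex.ofRealCLM ∘ (gfun ∘ v) := by
    funext ξ
    simp only [Function.comp_apply, hvval ξ, hgdef, hp_eq (v ξ) (hlow ξ)]
    exact (Complex.ofReal_inv (v ξ)).symm
  rw [hkey]
  -- bounds on iterated derivatives of `v`
  have hL : ∀ i : ℕ, 1 ≤ i → ∀ x : ℝ, ‖iteratedFDeriv ℝ i v x‖
      ≤ ‖((-1 : ℝ) • Complex.reCLM : ℂ →L[ℝ] ℝ)‖ * SchwartzMap.seminorm ℝ 0 i w := by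
    intro i hi x
    set L : ℂ →L[ℝ] ℝ := (-1 : ℝ) • Complex.reCLM with hLdef
    have hvsum : v = (fun _ : ℝ => (1 : ℝ)) + fun ξ => L (w ξ) := by
      funext ξ
      simp [hv, hLdef, sub_eq_add_neg]
    have hLw : ContDiff ℝ (i : WithTop ℕ∞) fun ξ : ℝ => L (w ξ) :=
      ((L.contDiff (n := STop)).comp (w.smooth ⊤)).of_le (natle_STop i)
    rw [hvsum, iteratedFDeriv_add_apply contDiff_const.contDiffAt hLw.contDiffAt,
      iteratedFDeriv_const_of_ne (by omega : i ≠ 0)]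
    simp only [Pi.zero_apply, zero_add]
    have hcl : iteratedFDeriv ℝ i (fun ξ => L (w ξ)) x
        = L.compContinuousMultilinearMap (iteratedFDeriv ℝ i (⇑w) x) :=
      L.iteratedFDeriv_comp_left (x := x) (w.smooth ⊤).contDiffAt (natle_STop i)
    rw [hcl]
    calc ‖L.compContinuousMultilinearMap (iteratedFDeriv ℝ i (⇑w) x)‖
        ≤ ‖L‖ * ‖iteratedFDeriv ℝ i (⇑w) x‖ := L.norm_compContinuousMultilinearMap_le _
      _ ≤ ‖L‖ * SchwartzMap.seminorm ℝ 0 i w :=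
          mul_le_mul_of_nonneg_left
            (by simpa using w.norm_iteratedFDeriv_le_seminorm ℝ i x) (norm_nonneg L)
  -- range of v lies in a compact interval
  set M : ℝ := 1 + SchwartzMap.seminorm ℝ 0 0 w with hM
  have hvmem : ∀ ξ, v ξ ∈ Set.Icc c M := by
    intro ξ
    refine ⟨hlow ξ, ?_⟩
    have h1 : |(w ξ).re| ≤ ‖w ξ‖ := Complex.abs_re_le_norm _
    have h2 : ‖w ξ‖ ≤ SchwartzMap.seminorm ℝ 0 0 w := w.norm_le_seminorm ℝ ξ
    have h3 := abs_le.1 h1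
    simp only [hv, hM]
    linarith [h3.1, h3.2]
  -- apply the composition bound
  apply hasTemperateGrowth_of_bounded
  · exact (Complex.ofRealCLM.contDiff (n := STop)).comp (hg_smooth.comp hv_smooth)
  intro n
  -- bound the derivatives of gfun on Icc c M
  have hCg : ∀ i : ℕ, ∃ Ci : ℝ, ∀ y ∈ Set.Icc c M, ‖iteratedFDeriv ℝ i gfun y‖ ≤ Ci := by
    intro i
    exact isCompact_Icc.exists_bound_of_continuousOn
      ((hg_smooth.continuous_iteratedFDeriv (natle_STop i)).continuousOn)
  choose Cg hCgs using hCg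
  set C : ℝ := ∑ i ∈ Finset.range (n + 1), |Cg i| with hCdef
  set D : ℝ := max 1 (∑ i ∈ Finset.range (n + 1),
    ‖((-1 : ℝ) • Complex.reCLM : ℂ →L[ℝ] ℝ)‖ * SchwartzMap.seminorm ℝ 0 i w) with hDdef
  have hD1 : (1 : ℝ) ≤ D := le_max_left _ _
  refine ⟨‖(Complex.ofRealCLM : ℝ →L[ℝ] ℂ)‖ * ((n.factorial : ℝ) * C * D ^ n), fun x => ?_⟩
  have hcomp : ‖iteratedFDeriv ℝ n (gfun ∘ v) x‖ ≤ (n.factorial : ℝ) * C * D ^ n := by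
    apply norm_iteratedFDeriv_comp_le hg_smooth hv_smooth (natle_STop n) x
    · intro i hi
      calc ‖iteratedFDeriv ℝ i gfun (v x)‖ ≤ Cg i := hCgs i (v x) (hvmem x)
        _ ≤ |Cg i| := le_abs_self _
        _ ≤ C := Finset.single_le_sum (f := fun j => |Cg j|)
            (fun j _ => abs_nonneg _) (Finset.mem_range.2 (by omega))
    · intro i hi1 hin
      calc ‖iteratedFDeriv ℝ i v x‖
          ≤ ‖((-1 : ℝ) • Complex.reCLM : ℂ →L[ℝ] ℝ)‖ * SchwartzMap.seminorm ℝ 0 i w :=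
            hL i hi1 x
        _ ≤ D := le_trans (Finset.single_le_sum
            (f := fun j => ‖((-1 : ℝ) • Complex.reCLM : ℂ →L[ℝ] ℝ)‖
              * SchwartzMap.seminorm ℝ 0 j w)
            (fun j _ => mul_nonneg (norm_nonneg _) (apply_nonneg _ _))
            (Finset.mem_range.2 (by omega))) (le_max_right _ _)
        _ = D ^ 1 := (pow_one D).symm
        _ ≤ D ^ i := pow_le_pow_right₀ hD1 hi1
  calc ‖iteratedFDeriv ℝ n (Complex.ofRealCLM ∘ (gfun ∘ v)) x‖
      = ‖Complex.ofRealCLM.compContinuousMultilinearMap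
          (iteratedFDeriv ℝ n (gfun ∘ v) x)‖ := by
        rw [Complex.ofRealCLM.iteratedFDeriv_comp_left (x := x)
          (hg_smooth.comp hv_smooth).contDiffAt (natle_STop n)]
    _ ≤ ‖(Complex.ofRealCLM : ℝ →L[ℝ] ℂ)‖ * ‖iteratedFDeriv ℝ n (gfun ∘ v) x‖ :=
        ContinuousLinearMap.norm_compContinuousMultilinearMap_le _ _
    _ ≤ ‖(Complex.ofRealCLM : ℝ →L[ℝ] ℂ)‖ * ((n.factorial : ℝ) * C * D ^ n) :=
        mul_le_mul_of_nonneg_left hcomp (norm_nonneg _)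

open Filter Topology in
lemma exists_uniform_bound (f : 𝓢(ℝ, ℂ)) (μ : ℝ) (hμ : ∀ ξ : ℝ, μ * (f ξ).re < 1) :
    ∃ a : ℝ, a < 1 ∧ ∀ ξ : ℝ, μ * (f ξ).re ≤ a := by
  classical
  have hcont : Continuous fun ξ : ℝ => μ * (f ξ).re :=
    continuous_const.mul (Complex.continuous_re.comp f.continuous)
  have h0 : Tendsto (fun ξ : ℝ => μ * (f ξ).re) (cocompact ℝ) (𝓝 0) := by
    have h1 : Tendsto (⇑f) (cocompact ℝ) (𝓝 0) := by
      have := (f.toZeroAtInfty).zero_at_infty'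
      exact this.congr fun x => rfl
    have h2 : Tendsto (fun ξ : ℝ => (f ξ).re) (cocompact ℝ) (𝓝 0) := by
      simpa [Function.comp_def] using (Complex.continuous_re.tendsto 0).comp h1
    simpa using h2.const_mul μ
  have hev : ∀ᶠ ξ : ℝ in cocompact ℝ, μ * (f ξ).re < 1 / 2 :=
    h0.eventually_lt_const (by norm_num)
  obtain ⟨K, hK, hKs⟩ := (Filter.hasBasis_cocompact.eventually_iff).1 hev
  by_cases hne : K.Nonempty
  · obtain ⟨ξ₀, hξ₀K, hmax⟩ := hK.exists_isMaxOn hne hcont.continuousOn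
    refine ⟨max (1 / 2) (μ * (f ξ₀).re), max_lt (by norm_num) (hμ ξ₀), fun ξ => ?_⟩
    by_cases hmem : ξ ∈ K
    · exact le_max_of_le_right (hmax hmem)
    · exact le_max_of_le_left (le_of_lt (hKs hmem))
  · refine ⟨1 / 2, by norm_num, fun ξ => le_of_lt (hKs fun hmem => hne ⟨ξ, hmem⟩)⟩

/-- If `ω₁ ∈ 𝒮(ℝ)` has real Fourier transform with `μ ω̂₁ < 1` everywhere, then for every
tempered distribution `I` there is a unique tempered distribution `b` with
`b = I + μ ω₁ ∗ b`, and it is given by `b = I + μ K ∗ I` where `K ∈ 𝒮(ℝ)` has Fourier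
transform `K̂ = ω̂₁/(1 − μ ω̂₁)`. Convolution of a Schwartz function with a tempered
distribution is encoded by its defining property `(g ∗ T)(φ) = T(x ↦ ∫ g(y) φ(x+y) dy)`. -/
theorem tempered_distribution_resolvent
    (conv : 𝓢(ℝ, ℂ) → (𝓢(ℝ, ℂ) →L[ℝ] ℂ) → (𝓢(ℝ, ℂ) →L[ℝ] ℂ))
    (hconv : ∀ (g : 𝓢(ℝ, ℂ)) (T : 𝓢(ℝ, ℂ) →L[ℝ] ℂ) (φ ψ : 𝓢(ℝ, ℂ)),
      (∀ x : ℝ, ψ x = ∫ y : ℝ, g y * φ (x + y)) → (conv g T) φ = T ψ)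
    (ω₁ : 𝓢(ℝ, ℂ)) (μ : ℝ) (hμ0 : 0 < μ)
    (hreal : ∀ ξ : ℝ, (𝓕 (ω₁ : ℝ → ℂ) ξ).im = 0)
    (hμ : ∀ ξ : ℝ, μ * (𝓕 (ω₁ : ℝ → ℂ) ξ).re < 1) :
    ∀ I : 𝓢(ℝ, ℂ) →L[ℝ] ℂ,
      (∃! b : 𝓢(ℝ, ℂ) →L[ℝ] ℂ, b = I + μ • conv ω₁ b) ∧
      ∃ K : 𝓢(ℝ, ℂ),
        (∀ ξ : ℝ, 𝓕 (K : ℝ → ℂ) ξ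
          = 𝓕 (ω₁ : ℝ → ℂ) ξ / (1 - (μ : ℂ) * 𝓕 (ω₁ : ℝ → ℂ) ξ)) ∧
        ∀ b : 𝓢(ℝ, ℂ) →L[ℝ] ℂ, b = I + μ • conv ω₁ b → b = I + μ • conv K I := by
  intro I
  have hconv' : ∀ (g : 𝓢(ℝ, ℂ)) (T : 𝓢(ℝ, ℂ) →L[ℝ] ℂ) (φ : 𝓢(ℝ, ℂ)),
      conv g T φ = T (corr g φ) := fun g T φ => hconv g T φ (corr g φ) (corr_apply g φ)
  -- notation
  set Fω : 𝓢(ℝ, ℂ) := fourierTransformCLE ℝ 𝓢(ℝ, ℂ) ω₁ with hFω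
  have hFωcoe : ∀ ξ : ℝ, Fω ξ = 𝓕 (ω₁ : ℝ → ℂ) ξ := fun ξ => rfl
  -- uniform bound
  obtain ⟨a, ha1, ha⟩ := exists_uniform_bound Fω μ (fun ξ => by rw [hFωcoe]; exact hμ ξ)
  set c : ℝ := 1 - a with hc
  have hcpos : 0 < c := by simp [hc]; linarith
  -- the Schwartz multiplier
  set w : 𝓢(ℝ, ℂ) := μ • Fω with hw
  have hwim : ∀ ξ : ℝ, (w ξ).im = 0 := by
    intro ξ
    have : w ξ = μ • Fω ξ := rfl
    rw [this, Complex.smul_im, hFωcoe, hreal ξ]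
    simp
  have hwlow : ∀ ξ : ℝ, c ≤ 1 - (w ξ).re := by
    intro ξ
    have h1 : (w ξ).re = μ * (Fω ξ).re := by
      have : w ξ = μ • Fω ξ := rfl
      rw [this, Complex.smul_re]; rfl
    have := ha ξ
    simp only [h1, hc]
    linarith
  have htemp := hasTemperateGrowth_inv_one_sub w c hcpos hwim hwlow
  -- key: 1 - μ 𝓕ω₁ is never zero
  have hwval : ∀ ξ : ℝ, (1 : ℂ) - (μ : ℂ) * 𝓕 (ω₁ : ℝ → ℂ) ξ = (1 : ℂ) - w ξ := by
    intro ξ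
    have : w ξ = μ • Fω ξ := rfl
    rw [this, ← hFωcoe, Complex.real_smul]
  have hne : ∀ ξ : ℝ, (1 : ℂ) - (μ : ℂ) * 𝓕 (ω₁ : ℝ → ℂ) ξ ≠ 0 := by
    intro ξ h
    rw [hwval ξ] at h
    have hre := congrArg Complex.re h
    simp only [Complex.sub_re, Complex.one_re, Complex.zero_re] at hre
    have := hwlow ξ
    linarith
  -- the resolvent kernel
  set Mker : 𝓢(ℝ, ℂ) :=
    SchwartzMap.bilinLeftCLM (ContinuousLinearMap.mul ℝ ℂ) htemp Fω with hMker
  set K : 𝓢(ℝ, ℂ) := (fourierTransformCLE ℝ 𝓢(ℝ, ℂ)).symm Mker with hKdef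
  have hFK : ∀ ξ : ℝ, 𝓕 (K : ℝ → ℂ) ξ
      = 𝓕 (ω₁ : ℝ → ℂ) ξ / (1 - (μ : ℂ) * 𝓕 (ω₁ : ℝ → ℂ) ξ) := by
    intro ξ
    have h1 : 𝓕 (K : ℝ → ℂ) ξ = (fourierTransformCLE ℝ 𝓢(ℝ, ℂ) K) ξ := rfl
    rw [h1, hKdef, ContinuousLinearEquiv.apply_symm_apply]
    have h2 : Mker ξ = Fω ξ * ((1 : ℂ) - w ξ)⁻¹ := rfl
    rw [h2, hFωcoe, ← hwval ξ, div_eq_mul_inv]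
  -- Fourier-side algebraic identity
  have hkeyalg : ∀ ξ : ℝ, 𝓕 (K : ℝ → ℂ) ξ
      = 𝓕 (ω₁ : ℝ → ℂ) ξ + (μ : ℂ) * (𝓕 (K : ℝ → ℂ) ξ * 𝓕 (ω₁ : ℝ → ℂ) ξ) := by
    intro ξ
    rw [hFK ξ]
    rw [div_eq_mul_inv]
    have h := mul_inv_cancel₀ (hne ξ)
    linear_combination 𝓕 (ω₁ : ℝ → ℂ) ξ * h
  -- the two correlation identities
  have hFcorr : ∀ (g φ : 𝓢(ℝ, ℂ)) (ξ : ℝ),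
      (fourierTransformCLE ℝ 𝓢(ℝ, ℂ)) (corr g φ) ξ = 𝓕 (φ : ℝ → ℂ) ξ * 𝓕 (g : ℝ → ℂ) (-ξ) :=
    fun g φ ξ => fourier_corr g φ ξ
  have hid : ∀ φ : 𝓢(ℝ, ℂ), corr K φ = corr ω₁ φ + μ • corr K (corr ω₁ φ) := by
    intro φ
    apply (fourierTransformCLE ℝ 𝓢(ℝ, ℂ)).injective
    rw [map_add, _root_.map_smul]
    ext ξ
    rw [SchwartzMap.add_apply, SchwartzMap.smul_apply, hFcorr, hFcorr, hFcorr,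
      show 𝓕 (⇑(corr ω₁ φ)) ξ = 𝓕 (⇑φ) ξ * 𝓕 (⇑ω₁) (-ξ) from hFcorr ω₁ φ ξ]
    rw [Complex.real_smul]
    have hk := hkeyalg (-ξ)
    linear_combination 𝓕 (φ : ℝ → ℂ) ξ * hk
  have hid2 : ∀ χ : 𝓢(ℝ, ℂ), corr K χ = corr ω₁ χ + μ • corr ω₁ (corr K χ) := by
    intro χ
    apply (fourierTransformCLE ℝ 𝓢(ℝ, ℂ)).injective
    rw [map_add, _root_.map_smul]
    ext ξ
    rw [SchwartzMap.add_apply, SchwartzMap.smul_apply, hFcorr, hFcorr, hFcorr,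
      show 𝓕 (⇑(corr K χ)) ξ = 𝓕 (⇑χ) ξ * 𝓕 (⇑K) (-ξ) from hFcorr K χ ξ]
    rw [Complex.real_smul]
    have hk := hkeyalg (-ξ)
    linear_combination 𝓕 (χ : ℝ → ℂ) ξ * hk
  -- existence
  set b₀ : 𝓢(ℝ, ℂ) →L[ℝ] ℂ := I + μ • conv K I with hb₀def
  have hb₀ : b₀ = I + μ • conv ω₁ b₀ := by
    apply ContinuousLinearMap.ext
    intro φ
    have h1 : b₀ φ = I φ + μ • I (corr K φ) := by
      rw [hb₀def]
      simp only [ContinuousLinearMap.add_apply, ContinuousLinearMap.smul_apply]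
      rw [hconv']
    have h2 : (I + μ • conv ω₁ b₀) φ = I φ + μ • b₀ (corr ω₁ φ) := by
      simp only [ContinuousLinearMap.add_apply, ContinuousLinearMap.smul_apply]
      rw [hconv']
    rw [h1, h2]
    have h3 : b₀ (corr ω₁ φ) = I (corr ω₁ φ) + μ • I (corr K (corr ω₁ φ)) := by
      rw [hb₀def]
      simp only [ContinuousLinearMap.add_apply, ContinuousLinearMap.smul_apply]
      rw [hconv']
    rw [h3]
    have h4 : I (corr K φ) = I (corr ω₁ φ) + μ • I (corr K (corr ω₁ φ)) := by
      rw [hid φ, map_add, _root_.map_smul]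
    rw [h4]
  -- uniqueness
  have huniq : ∀ b₁ b₂ : 𝓢(ℝ, ℂ) →L[ℝ] ℂ,
      b₁ = I + μ • conv ω₁ b₁ → b₂ = I + μ • conv ω₁ b₂ → b₁ = b₂ := by
    intro b₁ b₂ hb₁ hb₂
    have h1 : ∀ φ, b₁ φ = I φ + μ • b₁ (corr ω₁ φ) := by
      intro φ
      conv_lhs => rw [hb₁]
      simp only [ContinuousLinearMap.add_apply, ContinuousLinearMap.smul_apply]
      rw [hconv']
    have h2 : ∀ φ, b₂ φ = I φ + μ • b₂ (corr ω₁ φ) := by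
      intro φ
      conv_lhs => rw [hb₂]
      simp only [ContinuousLinearMap.add_apply, ContinuousLinearMap.smul_apply]
      rw [hconv']
    apply ContinuousLinearMap.ext
    intro χ
    set φ : 𝓢(ℝ, ℂ) := χ + μ • corr K χ with hφdef
    have hφsplit : corr ω₁ φ = corr K χ := by
      rw [hφdef, corr_add, corr_smul, ← hid2 χ]
    have hχ : χ = φ - μ • corr ω₁ φ := by
      rw [hφsplit, hφdef]
      abel
    have hd : b₁ φ - b₂ φ = μ • (b₁ (corr ω₁ φ) - b₂ (corr ω₁ φ)) := by
      rw [h1 φ, h2 φ, smul_sub]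
      abel
    have hzero : b₁ χ - b₂ χ = 0 := by
      rw [hχ]
      simp only [map_sub, _root_.map_smul]
      simp only [Complex.real_smul] at hd ⊢
      linear_combination hd
    have := sub_eq_zero.1 hzero
    exact this
  refine ⟨⟨b₀, hb₀, fun b hb => huniq b b₀ hb hb₀⟩, K, hFK, fun b hb => huniq b b₀ hb hb₀⟩
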